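/- Let d, n be positive integers, X = [x_1, ..., x_n] with x_i ∈ ℝ^d, λ > 0, and y ∈ {-1,1}^n with y_i = -1 for some i and y_j = 1 for some j. Then ∫_{ℝ^d} ∫_ℝ [∏_{i=1}^n exp(-V(y_i(β₀ + x_iᵀβ)))] · exp(-(λn/2)‖β‖₂²) dβ₀ dβ ≤ 2‖X‖₁ · d · (2/(λn)) · (2π/(λn))^{(d-1)/2} + 2e · (2π/(λn))^{d/2}, where ‖X‖₁ denotes the sum of the absolute values of all entries of X. -/

import Mathlib

open MeasureTheory Real
open scoped RealInnerProductSpace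

/-- The DWD loss function. -/
noncomputable def V (u : ℝ) : ℝ := if u ≤ 1/2 then 1 - u else 1/(4*u)


/-- The DWD loss function. -/

lemma V_nonneg (u : ℝ) : 0 ≤ V u := by
  unfold V; split
  · linarith
  · rename_i h
    push_neg at h
    positivity

lemma V_ge (u : ℝ) : 1 - u ≤ V u := by
  unfold V; split
  · exact le_refl _
  · rename_i h
    push_neg at h
    rw [le_div_iff₀ (by linarith : (0:ℝ) < 4 * u)]
    nlinarith [sq_nonneg (2*u - 1)]

lemma expV_le_one (u : ℝ) : Real.exp (-V u) ≤ 1 :=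
  Real.exp_le_one_iff.2 (neg_nonpos.2 (V_nonneg u))

lemma expV_le (u : ℝ) : Real.exp (-V u) ≤ Real.exp (u - 1) :=
  Real.exp_le_exp.2 (by linarith [V_ge u])

lemma inner_integral_bound (A B K : ℝ) (hK : 0 ≤ K) (p : ℝ → ℝ)
    (hp0 : ∀ t, 0 ≤ p t)
    (hp : ∀ t, p t ≤ min 1 (Real.exp (t + A - 1)) * min 1 (Real.exp (-t - B - 1)) * K) :
    ∫ t, p t ≤ (|A - B| + 2 * Real.exp 1) * K := by
  set c₁ : ℝ := 1 - A with hc₁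
  set c₂ : ℝ := -1 - B with hc₂
  set h₁ : ℝ → ℝ := Set.indicator (Set.Iic c₁) (fun t => Real.exp (t - c₁)) with hh₁
  set h₂ : ℝ → ℝ := Set.indicator (Set.Ici c₂) (fun t => Real.exp (c₂ - t)) with hh₂
  set h₃ : ℝ → ℝ := Set.indicator (Set.Icc c₁ c₂) (fun _ => (1:ℝ)) with hh₃
  have hint1 : Integrable h₁ := by
    refine IntegrableOn.integrable_indicator ?_ measurableSet_Iic
    simpa [Real.exp_sub, IntegrableOn] using (integrableOn_exp_Iic c₁).div_const (Real.exp c₁)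
  have hint2 : Integrable h₂ := by
    refine IntegrableOn.integrable_indicator ?_ measurableSet_Ici
    rw [integrableOn_Ici_iff_integrableOn_Ioi]
    have h0 := (exp_neg_integrableOn_Ioi c₂ (by norm_num : (0:ℝ) < 1)).const_mul (Real.exp c₂)
    have heq : (fun t : ℝ => Real.exp (c₂ - t)) = fun t : ℝ => Real.exp c₂ * Real.exp (-1 * t) := by
      funext t; rw [← Real.exp_add]; ring_nf
    rw [heq]
    exact h0
  have hint3 : Integrable h₃ := by
    refine IntegrableOn.integrable_indicator ?_ measurableSet_Icc
    exact integrableOn_const measure_Icc_lt_top.ne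
  have hi1 : ∫ t, h₁ t = 1 := by
    rw [hh₁, integral_indicator measurableSet_Iic]
    simp_rw [Real.exp_sub]
    rw [integral_div, integral_exp_Iic, div_self (Real.exp_ne_zero c₁)]
  have hi2 : ∫ t, h₂ t = 1 := by
    rw [hh₂, integral_indicator measurableSet_Ici]
    have : ∀ t : ℝ, Real.exp (c₂ - t) = Real.exp c₂ * Real.exp (-t) := by
      intro t; rw [← Real.exp_add]; ring_nf
    simp_rw [this]
    rw [MeasureTheory.integral_Ici_eq_integral_Ioi, integral_const_mul, integral_exp_neg_Ioi,
      ← Real.exp_add]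
    simp
  have hi3 : ∫ t, h₃ t ≤ |A - B| := by
    rw [hh₃]
    have : Set.indicator (Set.Icc c₁ c₂) (fun _ => (1:ℝ)) = Set.indicator (Set.Icc c₁ c₂) 1 := rfl
    rw [this, MeasureTheory.integral_indicator_one measurableSet_Icc, Real.volume_real_Icc]
    apply max_le
    · calc c₂ - c₁ ≤ A - B := by rw [hc₁, hc₂]; linarith
        _ ≤ |A - B| := le_abs_self _
    · positivity
  have hint12 : Integrable (fun t => h₁ t + h₂ t) := hint1.add hint2
  have hrint : Integrable (fun t => (h₁ t + h₂ t + h₃ t) * K) :=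
    (hint12.add hint3).mul_const K
  have hle : ∀ t, p t ≤ (h₁ t + h₂ t + h₃ t) * K := by
    intro t
    refine (hp t).trans (mul_le_mul_of_nonneg_right ?_ hK)
    have n1 : 0 ≤ h₁ t := Set.indicator_nonneg (fun s _ => (Real.exp_pos _).le) t
    have n2 : 0 ≤ h₂ t := Set.indicator_nonneg (fun s _ => (Real.exp_pos _).le) t
    have n3 : 0 ≤ h₃ t := Set.indicator_nonneg (fun s _ => zero_le_one) t
    have m1 : (0:ℝ) ≤ min 1 (Real.exp (t + A - 1)) := le_min zero_le_one (Real.exp_pos _).le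
    have m2 : (0:ℝ) ≤ min 1 (Real.exp (-t - B - 1)) := le_min zero_le_one (Real.exp_pos _).le
    rcases le_or_gt t c₁ with h | h
    · have e1 : h₁ t = Real.exp (t - c₁) := Set.indicator_of_mem (Set.mem_Iic.2 h) _
      have : min 1 (Real.exp (t + A - 1)) * min 1 (Real.exp (-t - B - 1))
          ≤ Real.exp (t + A - 1) * 1 := mul_le_mul (min_le_right _ _) (min_le_left _ _) m2
            (Real.exp_pos _).le
      rw [mul_one] at this
      have : min 1 (Real.exp (t + A - 1)) * min 1 (Real.exp (-t - B - 1)) ≤ h₁ t := by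
        rw [e1]; convert this using 2; rw [hc₁]; ring
      linarith
    · rcases le_or_gt c₂ t with h' | h'
      · have e2 : h₂ t = Real.exp (c₂ - t) := Set.indicator_of_mem (Set.mem_Ici.2 h') _
        have : min 1 (Real.exp (t + A - 1)) * min 1 (Real.exp (-t - B - 1))
            ≤ 1 * Real.exp (-t - B - 1) := mul_le_mul (min_le_left _ _) (min_le_right _ _) m2
              zero_le_one
        rw [one_mul] at this
        have : min 1 (Real.exp (t + A - 1)) * min 1 (Real.exp (-t - B - 1)) ≤ h₂ t := by
          rw [e2]; convert this using 2; rw [hc₂]; ring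
        linarith
      · have e3 : h₃ t = 1 := Set.indicator_of_mem (Set.mem_Icc.2 ⟨h.le, h'.le⟩) _
        have : min 1 (Real.exp (t + A - 1)) * min 1 (Real.exp (-t - B - 1)) ≤ 1 * 1 :=
          mul_le_mul (min_le_left _ _) (min_le_left _ _) m2 zero_le_one
        rw [one_mul] at this
        linarith
  calc ∫ t, p t ≤ ∫ t, (h₁ t + h₂ t + h₃ t) * K := by
        refine integral_mono_of_nonneg (Filter.Eventually.of_forall hp0) hrint
          (Filter.Eventually.of_forall hle)
    _ = (∫ t, h₁ t + h₂ t + h₃ t) * K := integral_mul_const _ _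
    _ = ((∫ t, h₁ t) + (∫ t, h₂ t) + (∫ t, h₃ t)) * K := by
        rw [integral_add hint12 hint3, integral_add hint1 hint2]
    _ ≤ (|A - B| + 2 * Real.exp 1) * K := by
        refine mul_le_mul_of_nonneg_right ?_ hK
        rw [hi1, hi2]
        have : (1:ℝ) ≤ Real.exp 1 := by
          have := Real.add_one_le_exp (1:ℝ); linarith
        linarith

lemma integral_abs_gauss {c : ℝ} (hc : 0 < c) :
    ∫ u : ℝ, |u| * Real.exp (-c * u ^ 2) = 1 / c := by
  have h1 : ∫ u : ℝ in Set.Ioi (0:ℝ), u * Real.exp (-c * u ^ 2) = 1 / (2 * c) := by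
    have hderiv : ∀ u ∈ Set.Ioi (0:ℝ),
        HasDerivAt (fun v : ℝ => -(1/(2*c)) * Real.exp (-c * v ^ 2))
          (u * Real.exp (-c * u ^ 2)) u := by
      intro u _
      have h : HasDerivAt (fun v : ℝ => -c * v ^ 2) (-c * (2 * u)) u := by
        simpa using ((hasDerivAt_pow 2 u).const_mul (-c))
      have := (h.exp).const_mul (-(1/(2*c)))
      refine this.congr_deriv ?_
      field_simp
    have hcont : ContinuousWithinAt (fun v : ℝ => -(1/(2*c)) * Real.exp (-c * v ^ 2))
        (Set.Ici 0) 0 := Continuous.continuousWithinAt (by fun_prop)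
    have hint : IntegrableOn (fun u : ℝ => u * Real.exp (-c * u ^ 2)) (Set.Ioi 0) :=
      (integrable_mul_exp_neg_mul_sq hc).integrableOn
    have htend : Filter.Tendsto (fun v : ℝ => -(1/(2*c)) * Real.exp (-c * v ^ 2))
        Filter.atTop (nhds 0) := by
      have h2 : Filter.Tendsto (fun v : ℝ => -c * v ^ 2) Filter.atTop Filter.atBot := by
        exact (Filter.tendsto_pow_atTop (by norm_num : 2 ≠ 0)).const_mul_atTop_of_neg (by linarith : -c < 0)
      have := (Real.tendsto_exp_atBot.comp h2).const_mul (-(1/(2*c)))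
      simpa using this
    have := integral_Ioi_of_hasDerivAt_of_tendsto hcont hderiv hint htend
    rw [this]
    norm_num
  have hfind : (fun u : ℝ => |u| * Real.exp (-c * u ^ 2))
      = fun u : ℝ => |u| * Real.exp (-c * |u| ^ 2) := by
    funext u; rw [sq_abs]
  rw [hfind, integral_comp_abs (f := fun u => u * Real.exp (-c * u ^ 2)), h1]
  field_simp

lemma integrable_abs_gauss {c : ℝ} (hc : 0 < c) :
    Integrable (fun u : ℝ => |u| * Real.exp (-c * u ^ 2)) := by
  have := (integrable_mul_exp_neg_mul_sq hc).abs
  have heq : (fun u : ℝ => |u * Real.exp (-c * u ^ 2)|)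
      = fun u : ℝ => |u| * Real.exp (-c * u ^ 2) := by
    funext u; rw [abs_mul, abs_of_pos (Real.exp_pos _)]
  rwa [heq] at this

section
variable {d : ℕ}

lemma euclid_norm_sq (β : EuclideanSpace ℝ (Fin d)) : ‖β‖ ^ 2 = ∑ k, β k ^ 2 := by
  rw [EuclideanSpace.norm_eq, Real.sq_sqrt (Finset.sum_nonneg fun k _ => sq_nonneg _)]
  simp [Real.norm_eq_abs, sq_abs]

lemma euclid_integral (g : (Fin d → ℝ) → ℝ) :
    ∫ β : EuclideanSpace ℝ (Fin d), g (fun k => β k) = ∫ x : Fin d → ℝ, g x :=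
  (EuclideanSpace.volume_preserving_symm_measurableEquiv_toLp (ι := Fin d)).integral_comp' g

lemma euclid_integrable {g : (Fin d → ℝ) → ℝ} (hg : Integrable g) :
    Integrable (fun β : EuclideanSpace ℝ (Fin d) => g (fun k => β k)) :=
  ((EuclideanSpace.volume_preserving_symm_measurableEquiv_toLp (ι := Fin d)).integrable_comp_emb
    (MeasurableEquiv.measurableEmbedding _)).2 hg

lemma gauss_E_eq {c : ℝ} :
    (fun β : EuclideanSpace ℝ (Fin d) => Real.exp (-c * ‖β‖ ^ 2))
      = fun β => (fun x : Fin d → ℝ => ∏ k, Real.exp (-c * x k ^ 2)) (fun k => β k) := by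
  funext β
  simp only [euclid_norm_sq β, Finset.mul_sum, ← Real.exp_sum]

lemma integrable_gauss_E {c : ℝ} (hc : 0 < c) :
    Integrable (fun β : EuclideanSpace ℝ (Fin d) => Real.exp (-c * ‖β‖ ^ 2)) := by
  rw [gauss_E_eq]
  exact euclid_integrable (Integrable.fintype_prod fun _ => integrable_exp_neg_mul_sq hc)

lemma integral_gauss_E {c : ℝ} (hc : 0 < c) :
    ∫ β : EuclideanSpace ℝ (Fin d), Real.exp (-c * ‖β‖ ^ 2)
      = (Real.sqrt (π / c)) ^ d := by
  rw [gauss_E_eq, euclid_integral (fun x : Fin d → ℝ => ∏ k, Real.exp (-c * x k ^ 2)), volume_pi,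
    integral_fintype_prod_eq_prod (fun (_ : Fin d) (u : ℝ) => Real.exp (-c * u ^ 2))]
  simp only [integral_gaussian, Finset.prod_const, Finset.card_univ, Fintype.card_fin]

variable (c : ℝ) (k : Fin d)

noncomputable def gi : Fin d → ℝ → ℝ := fun i u => (if i = k then |u| else 1) * Real.exp (-c * u ^ 2)

lemma gi_prod (x : Fin d → ℝ) : (∏ i, gi c k i (x i)) = |x k| * Real.exp (-c * ∑ j, x j ^ 2) := by
  unfold gi
  rw [Finset.prod_mul_distrib]
  congr 1
  · simp
  · rw [Finset.mul_sum, Real.exp_sum]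

lemma absk_E_eq :
    (fun β : EuclideanSpace ℝ (Fin d) => |β k| * Real.exp (-c * ‖β‖ ^ 2))
      = fun β => (fun x : Fin d → ℝ => ∏ i, gi c k i (x i)) (fun j => β j) := by
  funext β
  rw [euclid_norm_sq β]
  exact (gi_prod c k fun j => β j).symm

lemma gi_integrable (hc : 0 < c) (i : Fin d) : Integrable (gi c k i) := by
  unfold gi
  by_cases h : i = k
  · simp only [h, if_pos rfl]
    exact integrable_abs_gauss hc
  · simp only [if_neg h, one_mul]
    exact integrable_exp_neg_mul_sq hc

lemma integrable_absk_E (hc : 0 < c) :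
    Integrable (fun β : EuclideanSpace ℝ (Fin d) => |β k| * Real.exp (-c * ‖β‖ ^ 2)) := by
  rw [absk_E_eq]
  exact euclid_integrable (Integrable.fintype_prod (gi_integrable c k hc))

lemma integral_absk_E (hc : 0 < c) :
    ∫ β : EuclideanSpace ℝ (Fin d), |β k| * Real.exp (-c * ‖β‖ ^ 2)
      = (1 / c) * (Real.sqrt (π / c)) ^ (d - 1) := by
  rw [absk_E_eq, euclid_integral (fun x : Fin d → ℝ => ∏ i, gi c k i (x i)), volume_pi,
    integral_fintype_prod_eq_prod (gi c k)]
  rw [← Finset.mul_prod_erase Finset.univ _ (Finset.mem_univ k)]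
  have h1 : ∫ u, gi c k k u = 1 / c := by
    unfold gi; simp only [if_pos rfl]; exact integral_abs_gauss hc
  have h2 : ∀ i ∈ Finset.univ.erase k, (∫ u, gi c k i u) = Real.sqrt (π / c) := by
    intro i hi
    have hik : i ≠ k := (Finset.mem_erase.1 hi).1
    unfold gi
    simp only [if_neg hik, one_mul]
    exact integral_gaussian c
  rw [h1, Finset.prod_congr rfl h2, Finset.prod_const, Finset.card_erase_of_mem (Finset.mem_univ k)]
  simp

end

/-- the iterated integral of the unnormalized Bayesian DWD
posterior density is bounded by
`2‖X‖₁ · d · (2/(λn)) · (2π/(λn))^((d-1)/2) + 2e · (2π/(λn))^(d/2)`,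
where `‖X‖₁` is the sum of the absolute values of all entries of `X`. -/
theorem dwd_posterior_integral_bound (d n : ℕ) (hd : 0 < d) (hn : 0 < n)
    (x : Fin n → EuclideanSpace ℝ (Fin d)) (lam : ℝ) (hlam : 0 < lam)
    (y : Fin n → ℝ) (hy : ∀ i, y i = -1 ∨ y i = 1)
    (hneg : ∃ i, y i = -1) (hpos : ∃ j, y j = 1) :
    (∫ β : EuclideanSpace ℝ (Fin d), ∫ β₀ : ℝ,
        (∏ i, Real.exp (-V (y i * (β₀ + ⟪x i, β⟫)))) *
          Real.exp (-(lam * n / 2) * ‖β‖^2))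
      ≤ 2 * (∑ i, ∑ j, |x i j|) * d * (2 / (lam * n)) *
          (2 * π / (lam * n)) ^ (((d : ℝ) - 1) / 2)
        + 2 * Real.exp 1 * (2 * π / (lam * n)) ^ ((d : ℝ) / 2) := by
  obtain ⟨i₀, hi₀⟩ := hneg
  obtain ⟨j₀, hj₀⟩ := hpos
  have hij : i₀ ≠ j₀ := by
    intro h; rw [h, hj₀] at hi₀; norm_num at hi₀
  have hn' : (0:ℝ) < n := by exact_mod_cast hn
  have hd1 : (1:ℝ) ≤ d := by exact_mod_cast hd
  set c : ℝ := lam * n / 2 with hc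
  have hc0 : 0 < c := by positivity
  set T : ℝ := ∑ i, ∑ j, |x i j| with hT
  have hT0 : 0 ≤ T := Finset.sum_nonneg fun i _ => Finset.sum_nonneg fun j _ => abs_nonneg _
  set a : Fin d → ℝ := fun k => |x j₀ k| + |x i₀ k| with ha
  have ha0 : ∀ k, 0 ≤ a k := fun k => by positivity
  set G : EuclideanSpace ℝ (Fin d) → ℝ :=
    fun β => (∑ k, a k * (|β k| * Real.exp (-c * ‖β‖ ^ 2)))
      + 2 * Real.exp 1 * Real.exp (-c * ‖β‖ ^ 2) with hG
  have hGint : Integrable G := by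
    apply Integrable.add
    · exact integrable_finset_sum _ fun k _ => (integrable_absk_E c k hc0).const_mul (a k)
    · exact (integrable_gauss_E hc0).const_mul _
  have step1 : (∫ β : EuclideanSpace ℝ (Fin d), ∫ β₀ : ℝ,
      (∏ i, Real.exp (-V (y i * (β₀ + ⟪x i, β⟫)))) *
        Real.exp (-c * ‖β‖^2)) ≤ ∫ β, G β := by
    refine integral_mono_of_nonneg (Filter.Eventually.of_forall fun β => ?_) hGint
      (Filter.Eventually.of_forall fun β => ?_)
    · exact integral_nonneg fun β₀ => mul_nonneg
        (Finset.prod_nonneg fun i _ => (Real.exp_pos _).le) (Real.exp_pos _).le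
    · set A : ℝ := ⟪x j₀, β⟫ with hA
      set B : ℝ := ⟪x i₀, β⟫ with hB
      have hp : ∀ β₀ : ℝ, (∏ i, Real.exp (-V (y i * (β₀ + ⟪x i, β⟫)))) *
          Real.exp (-c * ‖β‖^2)
          ≤ min 1 (Real.exp (β₀ + A - 1)) * min 1 (Real.exp (-β₀ - B - 1)) *
            Real.exp (-c * ‖β‖ ^ 2) := by
        intro β₀
        refine mul_le_mul_of_nonneg_right ?_ (Real.exp_pos _).le
        set f : Fin n → ℝ := fun i => Real.exp (-V (y i * (β₀ + ⟪x i, β⟫))) with hf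
        have hf0 : ∀ i, 0 ≤ f i := fun i => (Real.exp_pos _).le
        have hf1 : ∀ i, f i ≤ 1 := fun i => expV_le_one _
        have hprod : ∏ i, f i ≤ f j₀ * f i₀ := by
          rw [← Finset.mul_prod_erase Finset.univ f (Finset.mem_univ j₀),
            ← Finset.mul_prod_erase _ f
              (Finset.mem_erase.2 ⟨hij, Finset.mem_univ i₀⟩)]
          have hrest : ∏ i ∈ (Finset.univ.erase j₀).erase i₀, f i ≤ 1 :=
            Finset.prod_le_one (fun i _ => hf0 i) (fun i _ => hf1 i)
          calc f j₀ * (f i₀ * ∏ i ∈ (Finset.univ.erase j₀).erase i₀, f i)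
              ≤ f j₀ * (f i₀ * 1) := by
                refine mul_le_mul_of_nonneg_left ?_ (hf0 j₀)
                exact mul_le_mul_of_nonneg_left hrest (hf0 i₀)
            _ = f j₀ * f i₀ := by ring
        have hfj : f j₀ ≤ min 1 (Real.exp (β₀ + A - 1)) := by
          refine le_min (hf1 j₀) ?_
          have harg : y j₀ * (β₀ + ⟪x j₀, β⟫) = β₀ + A := by rw [hj₀, ← hA]; ring
          calc f j₀ = Real.exp (-V (β₀ + A)) := by rw [hf]; simp only [harg]
            _ ≤ Real.exp (β₀ + A - 1) := expV_le _
        have hfi : f i₀ ≤ min 1 (Real.exp (-β₀ - B - 1)) := by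
          refine le_min (hf1 i₀) ?_
          have harg : y i₀ * (β₀ + ⟪x i₀, β⟫) = -β₀ - B := by rw [hi₀, ← hB]; ring
          calc f i₀ = Real.exp (-V (-β₀ - B)) := by rw [hf]; simp only [harg]
            _ ≤ Real.exp (-β₀ - B - 1) := expV_le _
        calc ∏ i, f i ≤ f j₀ * f i₀ := hprod
          _ ≤ min 1 (Real.exp (β₀ + A - 1)) * min 1 (Real.exp (-β₀ - B - 1)) :=
            mul_le_mul hfj hfi (hf0 i₀) (le_min zero_le_one (Real.exp_pos _).le)
      have key := inner_integral_bound A B (Real.exp (-c * ‖β‖ ^ 2)) (Real.exp_pos _).le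
        (fun β₀ => (∏ i, Real.exp (-V (y i * (β₀ + ⟪x i, β⟫)))) * Real.exp (-c * ‖β‖^2))
        (fun β₀ => mul_nonneg (Finset.prod_nonneg fun i _ => (Real.exp_pos _).le)
          (Real.exp_pos _).le) hp
      refine key.trans ?_
      have habs : |A - B| ≤ ∑ k, a k * |β k| := by
        have h1 : A - B = ∑ k, (x j₀ k - x i₀ k) * β k := by
          rw [hA, hB, PiLp.inner_apply, PiLp.inner_apply]
          simp only [RCLike.inner_apply, conj_trivial]
          rw [← Finset.sum_sub_distrib]
          exact Finset.sum_congr rfl fun k _ => by ring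
        rw [h1]
        refine (Finset.abs_sum_le_sum_abs _ _).trans (Finset.sum_le_sum fun k _ => ?_)
        rw [abs_mul, ha]
        exact mul_le_mul_of_nonneg_right (abs_sub _ _) (abs_nonneg _)
      have hGeq : G β = (∑ k, a k * |β k|) * Real.exp (-c * ‖β‖ ^ 2)
          + 2 * Real.exp 1 * Real.exp (-c * ‖β‖ ^ 2) := by
        rw [hG, Finset.sum_mul]
        simp only
        congr 1
        exact Finset.sum_congr rfl fun k _ => by ring
      rw [hGeq, add_mul]
      have := mul_le_mul_of_nonneg_right habs (Real.exp_pos (-c * ‖β‖ ^ 2)).le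
      linarith
  have hGval : ∫ β, G β = (∑ k, a k) * ((1 / c) * Real.sqrt (π / c) ^ (d - 1))
      + 2 * Real.exp 1 * Real.sqrt (π / c) ^ d := by
    rw [hG, integral_add (integrable_finset_sum _ fun k _ =>
        (integrable_absk_E c k hc0).const_mul (a k)) ((integrable_gauss_E hc0).const_mul _),
      integral_finset_sum _ fun k _ => (integrable_absk_E c k hc0).const_mul (a k)]
    simp only [integral_const_mul]
    rw [integral_gauss_E hc0]
    congr 1
    rw [Finset.sum_mul]
    exact Finset.sum_congr rfl fun k _ => by rw [integral_absk_E c k hc0]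
  set z : ℝ := 2 * π / (lam * n) with hz
  have hz0 : 0 < z := by positivity
  have hzc : π / c = z := by rw [hc, hz]; field_simp
  have h1c : 1 / c = 2 / (lam * n) := by rw [hc]; field_simp
  have hpow : ∀ m : ℕ, Real.sqrt (π / c) ^ m = z ^ ((m : ℝ) / 2) := by
    intro m
    rw [hzc, Real.sqrt_eq_rpow, ← Real.rpow_natCast (z ^ ((1:ℝ)/2)) m, ← Real.rpow_mul hz0.le]
    congr 1
    ring
  have hpow1 : Real.sqrt (π / c) ^ (d - 1) = z ^ (((d:ℝ) - 1) / 2) := by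
    rw [hpow]
    congr 1
    rw [Nat.cast_sub hd, Nat.cast_one]
  have hpow2 : Real.sqrt (π / c) ^ d = z ^ ((d:ℝ) / 2) := hpow d
  have hsum_a : ∑ k, a k ≤ 2 * T := by
    have e1 : ∑ k, a k = (∑ k, |x j₀ k|) + ∑ k, |x i₀ k| := by
      rw [ha, Finset.sum_add_distrib]
    have e2 : ∀ i : Fin n, (∑ k, |x i k|) ≤ T := by
      intro i
      rw [hT]
      exact Finset.single_le_sum (f := fun i => ∑ k, |x i k|)
        (fun i _ => Finset.sum_nonneg fun k _ => abs_nonneg _) (Finset.mem_univ i)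
    rw [e1]; linarith [e2 j₀, e2 i₀]
  refine step1.trans ?_
  rw [hGval, hpow1, hpow2, h1c]
  have hq : (0:ℝ) ≤ 2 / (lam * ↑n) * z ^ (((d:ℝ) - 1) / 2) := by positivity
  have hstep : (∑ k, a k) * (2 / (lam * ↑n) * z ^ (((d:ℝ) - 1) / 2))
      ≤ 2 * T * ↑d * (2 / (lam * ↑n)) * z ^ (((d:ℝ) - 1) / 2) := by
    calc (∑ k, a k) * (2 / (lam * ↑n) * z ^ (((d:ℝ) - 1) / 2))
        ≤ 2 * T * (2 / (lam * ↑n) * z ^ (((d:ℝ) - 1) / 2)) :=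
          mul_le_mul_of_nonneg_right hsum_a hq
      _ ≤ 2 * T * (2 / (lam * ↑n) * z ^ (((d:ℝ) - 1) / 2)) * d := by
          refine le_mul_of_one_le_right (by positivity) hd1
      _ = 2 * T * ↑d * (2 / (lam * ↑n)) * z ^ (((d:ℝ) - 1) / 2) := by ring
  linarith
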